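/- Let P be an n-qubit Pauli string with k-th tensor factor σ_k ∈ {I,X,Y,Z}, and for a Bell-basis outcome B_k let λ_{σ_k}(B_k) be the eigenvalue of σ_k⊗σ_k on the Bell state |B_k⟩. Then for any unit vector |ψ⟩ in (ℂ²)^{⊗n}, the expectation over the Bell measurement outcome distribution p(B) = |⟨B|(|ψ⟩⊗|ψ⟩)|² of the product Λ_P(B) = ∏_{k=1}^n λ_{σ_k}(B_k) equals |⟨ψ|P|ψ⟩|². -/

import Mathlib

open scoped Matrix BigOperators

noncomputable section

/-- The four Pauli matrices `I, X, Y, Z` indexed by `Fin 4`. -/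
def pauli : Fin 4 → Matrix (Fin 2) (Fin 2) ℂ :=
  ![(1 : Matrix (Fin 2) (Fin 2) ℂ),
    !![0, 1; 1, 0],
    !![0, -Complex.I; Complex.I, 0],
    !![1, 0; 0, -1]]

/-- The `n`-qubit Pauli string with Pauli matrix `f k` on qubit `k`. -/
def pauliString (n : ℕ) (f : Fin n → Fin 4) :
    Matrix (Fin n → Fin 2) (Fin n → Fin 2) ℂ :=
  Matrix.of fun i j => ∏ k : Fin n, pauli (f k) (i k) (j k)

/-- The four Bell states `Ψ⁺, Ψ⁻, Φ⁺, Φ⁻` indexed by `Fin 4`, as vectors on `ℂ²⊗ℂ²`. -/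
def bell : Fin 4 → Fin 2 × Fin 2 → ℂ := fun b p =>
  (![!![1, 0; 0, 1], !![1, 0; 0, -1], !![0, 1; 1, 0], !![0, 1; -1, 0]] b) p.1 p.2 / Real.sqrt 2

/-- Eigenvalue `λ_σ(B)` of `σ⊗σ` on the Bell state `B`, with `σ` indexed by `Fin 4`
as `I,X,Y,Z` and `B` as `Ψ⁺, Ψ⁻, Φ⁺, Φ⁻`. -/
def lam : Fin 4 → Fin 4 → ℝ := fun σ b =>
  (![![1, 1, 1, 1], ![1, -1, 1, -1], ![-1, 1, 1, -1], ![1, 1, -1, -1]] σ) b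

/-- The `2n`-qubit Bell-basis vector `|B⟩ = |B₁⟩⊗⋯⊗|Bₙ⟩`, pairing the `k`-th qubit of the
first copy with the `k`-th qubit of the second copy. -/
def bellVec (n : ℕ) (b : Fin n → Fin 4) : (Fin n → Fin 2) × (Fin n → Fin 2) → ℂ :=
  fun x => ∏ k : Fin n, bell (b k) (x.1 k, x.2 k)

/-- Tensor (Kronecker) product of two state vectors. -/
def vecKron {α β : Type*} (v : α → ℂ) (w : β → ℂ) : α × β → ℂ :=
  fun p => v p.1 * w p.2

/-- Conjugating a Pauli entry transposes it. -/
lemma pauli_conj (σ : Fin 4) (i j : Fin 2) :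
    (starRingEnd ℂ) (pauli σ i j) = pauli σ j i := by
  fin_cases σ <;> fin_cases i <;> fin_cases j <;>
    simp [pauli, Matrix.cons_val_zero, Matrix.cons_val_one, Matrix.head_cons,
      Matrix.cons_val_two, Matrix.cons_val_three, Matrix.vecTail, Matrix.vecHead,
      Matrix.one_apply]

set_option maxHeartbeats 4000000 in
/-- Single-qubit key identity: the `λ`-weighted sum of Bell projector entries gives
the Pauli tensor entries. -/
lemma key (σ : Fin 4) (x y x' y' : Fin 2) :
    ∑ c : Fin 4, ((lam σ c : ℝ) : ℂ) * (starRingEnd ℂ) (bell c (x, y)) * bell c (x', y')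
      = pauli σ x' x * pauli σ y' y := by
  have h2 : ((Real.sqrt 2 : ℝ) : ℂ) * ((Real.sqrt 2 : ℝ) : ℂ) = 2 := by
    norm_cast; exact Real.mul_self_sqrt (by norm_num)
  have h2sq : ((Real.sqrt 2 : ℝ) : ℂ) ^ 2 = 2 := by rw [sq]; exact h2
  have h0 : ((Real.sqrt 2 : ℝ) : ℂ) ≠ 0 := by
    simpa using Real.sqrt_ne_zero'.2 (by norm_num)
  fin_cases σ <;> fin_cases x <;> fin_cases y <;> fin_cases x' <;> fin_cases y'
  all_goals simp only [lam, bell, pauli, Fin.sum_univ_four, Fin.isValue]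
  all_goals norm_num [Matrix.cons_val_zero, Matrix.cons_val_one, Matrix.head_cons,
        Matrix.cons_val_two, Matrix.cons_val_three, Matrix.vecTail, Matrix.vecHead, h2]
  all_goals try ring
  all_goals try (field_simp; ring_nf)
  all_goals simp [h2sq]
  all_goals norm_num

/-- Product version of `key` over all qubits. -/
lemma key2 (n : ℕ) (f : Fin n → Fin 4)
    (q p : (Fin n → Fin 2) × (Fin n → Fin 2)) :
    ∑ b : Fin n → Fin 4,
        (∏ k : Fin n, ((lam (f k) (b k) : ℝ) : ℂ)) *
          ((starRingEnd ℂ) (bellVec n b q) * bellVec n b p)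
      = pauliString n f p.1 q.1 * pauliString n f p.2 q.2 := by
  classical
  have h : ∀ b : Fin n → Fin 4,
      (∏ k : Fin n, ((lam (f k) (b k) : ℝ) : ℂ)) *
          ((starRingEnd ℂ) (bellVec n b q) * bellVec n b p)
        = ∏ k : Fin n, (((lam (f k) (b k) : ℝ) : ℂ) *
            (starRingEnd ℂ) (bell (b k) (q.1 k, q.2 k)) * bell (b k) (p.1 k, p.2 k)) := by
    intro b
    simp only [bellVec, map_prod, Finset.prod_mul_distrib, mul_assoc]
  simp_rw [h]
  rw [← Fintype.prod_sum (fun k c => ((lam (f k) c : ℝ) : ℂ) *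
      (starRingEnd ℂ) (bell c (q.1 k, q.2 k)) * bell c (p.1 k, p.2 k))]
  simp only [pauliString, Matrix.of_apply]
  rw [← Finset.prod_mul_distrib]
  exact Finset.prod_congr rfl fun k _ => key (f k) (q.1 k) (q.2 k) (p.1 k) (p.2 k)

/-- Factorization of a quadruple sum into a product of two double sums. -/
lemma hfact {I : Type*} [Fintype I] (T : I → I → ℂ) :
    ∑ p : I × I, ∑ q : I × I, T p.1 q.1 * T p.2 q.2
      = (∑ a : I, ∑ c : I, T a c) * (∑ a : I, ∑ c : I, T a c) := by
  rw [Finset.sum_mul_sum, Fintype.sum_prod_type]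
  refine Finset.sum_congr rfl fun p1 _ => ?_
  refine Finset.sum_congr rfl fun p2 _ => ?_
  rw [Fintype.sum_prod_type, Finset.sum_mul_sum]

/-- the expectation of `Λ_P(B) = ∏ₖ λ_{σₖ}(Bₖ)` over the Bell measurement
outcome distribution `p(B) = |⟨B|(|ψ⟩⊗|ψ⟩)|²` equals `|⟨ψ|P|ψ⟩|²`. -/
theorem bell_sampling_expectation (n : ℕ) (f : Fin n → Fin 4)
    (ψ : (Fin n → Fin 2) → ℂ) (hψ : star ψ ⬝ᵥ ψ = 1) :
    ∑ b : Fin n → Fin 4,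
        (∏ k : Fin n, lam (f k) (b k)) *
          ‖star (bellVec n b) ⬝ᵥ vecKron ψ ψ‖ ^ 2
      = ‖star ψ ⬝ᵥ (pauliString n f).mulVec ψ‖ ^ 2 := by
  classical
  have herm : ∀ a c, (starRingEnd ℂ) (pauliString n f a c) = pauliString n f c a := by
    intro a c
    simp only [pauliString, Matrix.of_apply, map_prod]
    exact Finset.prod_congr rfl fun k _ => pauli_conj (f k) (a k) (c k)
  have hzsum : star ψ ⬝ᵥ (pauliString n f).mulVec ψ
      = ∑ a, ∑ c, (starRingEnd ℂ) (ψ a) * ψ c * pauliString n f a c := by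
    simp only [dotProduct, Matrix.mulVec, Pi.star_apply, Finset.mul_sum,
      ← starRingEnd_apply]
    exact Finset.sum_congr rfl fun a _ => Finset.sum_congr rfl fun c _ => by ring
  have hz : (starRingEnd ℂ) (star ψ ⬝ᵥ (pauliString n f).mulVec ψ)
      = star ψ ⬝ᵥ (pauliString n f).mulVec ψ := by
    rw [hzsum, map_sum]
    simp only [map_sum, map_mul, Complex.conj_conj, herm]
    rw [Finset.sum_comm]
    exact Finset.sum_congr rfl fun a _ => Finset.sum_congr rfl fun c _ => by ring
  have hS : ∀ b : Fin n → Fin 4, star (bellVec n b) ⬝ᵥ vecKron ψ ψ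
      = ∑ q : (Fin n → Fin 2) × (Fin n → Fin 2),
          (starRingEnd ℂ) (bellVec n b q) * (ψ q.1 * ψ q.2) := by
    intro b
    simp [dotProduct, vecKron, ← starRingEnd_apply]
  have hconjS : ∀ b : Fin n → Fin 4,
      (starRingEnd ℂ) (star (bellVec n b) ⬝ᵥ vecKron ψ ψ)
        = ∑ p : (Fin n → Fin 2) × (Fin n → Fin 2),
            bellVec n b p * ((starRingEnd ℂ) (ψ p.1) * (starRingEnd ℂ) (ψ p.2)) := by
    intro b
    rw [hS, map_sum]
    simp [map_mul, Complex.conj_conj]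
  simp only [Complex.sq_norm]
  apply Complex.ofReal_injective
  push_cast
  simp only [← Complex.mul_conj]
  -- step 1: expand each term as a double sum
  have step1 : ∀ b : Fin n → Fin 4,
      (∏ k : Fin n, ((lam (f k) (b k) : ℝ) : ℂ)) *
          ((star (bellVec n b) ⬝ᵥ vecKron ψ ψ) *
            (starRingEnd ℂ) (star (bellVec n b) ⬝ᵥ vecKron ψ ψ))
        = ∑ p : (Fin n → Fin 2) × (Fin n → Fin 2),
            ∑ q : (Fin n → Fin 2) × (Fin n → Fin 2),
              ((starRingEnd ℂ) (ψ p.1) * (starRingEnd ℂ) (ψ p.2) * (ψ q.1 * ψ q.2)) *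
                ((∏ k : Fin n, ((lam (f k) (b k) : ℝ) : ℂ)) *
                  ((starRingEnd ℂ) (bellVec n b q) * bellVec n b p)) := by
    intro b
    rw [hconjS b, hS b, mul_comm (∑ q : (Fin n → Fin 2) × (Fin n → Fin 2),
      (starRingEnd ℂ) (bellVec n b q) * (ψ q.1 * ψ q.2)) _, Finset.sum_mul_sum,
      Finset.mul_sum]
    refine Finset.sum_congr rfl fun p _ => ?_
    rw [Finset.mul_sum]
    refine Finset.sum_congr rfl fun q _ => ?_
    ring
  simp_rw [step1]
  -- step 2: reorder sums to put b innermost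
  rw [Finset.sum_comm]
  calc ∑ p : (Fin n → Fin 2) × (Fin n → Fin 2), ∑ b : Fin n → Fin 4,
        ∑ q : (Fin n → Fin 2) × (Fin n → Fin 2),
          ((starRingEnd ℂ) (ψ p.1) * (starRingEnd ℂ) (ψ p.2) * (ψ q.1 * ψ q.2)) *
            ((∏ k : Fin n, ((lam (f k) (b k) : ℝ) : ℂ)) *
              ((starRingEnd ℂ) (bellVec n b q) * bellVec n b p))
      = ∑ p : (Fin n → Fin 2) × (Fin n → Fin 2),
          ∑ q : (Fin n → Fin 2) × (Fin n → Fin 2),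
            ((starRingEnd ℂ) (ψ p.1) * (starRingEnd ℂ) (ψ p.2) * (ψ q.1 * ψ q.2)) *
              (pauliString n f p.1 q.1 * pauliString n f p.2 q.2) := by
        refine Finset.sum_congr rfl fun p _ => ?_
        rw [Finset.sum_comm]
        refine Finset.sum_congr rfl fun q _ => ?_
        rw [← Finset.mul_sum, key2 n f q p]
    _ = ∑ p : (Fin n → Fin 2) × (Fin n → Fin 2),
          ∑ q : (Fin n → Fin 2) × (Fin n → Fin 2),
            ((starRingEnd ℂ) (ψ p.1) * ψ q.1 * pauliString n f p.1 q.1) *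
              ((starRingEnd ℂ) (ψ p.2) * ψ q.2 * pauliString n f p.2 q.2) := by
        refine Finset.sum_congr rfl fun p _ => Finset.sum_congr rfl fun q _ => by ring
    _ = (∑ a, ∑ c, (starRingEnd ℂ) (ψ a) * ψ c * pauliString n f a c) *
          (∑ a, ∑ c, (starRingEnd ℂ) (ψ a) * ψ c * pauliString n f a c) :=
        hfact fun a c => (starRingEnd ℂ) (ψ a) * ψ c * pauliString n f a c
    _ = (star ψ ⬝ᵥ (pauliString n f).mulVec ψ) *
          (starRingEnd ℂ) (star ψ ⬝ᵥ (pauliString n f).mulVec ψ) := by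
        rw [hz, ← hzsum]

end
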